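/- Let n ≥ 4 and G = G_n(Alt_n). Let C = ⟨a_1a_2a_1^{-1}a_2^{-1}⟩ and D = ⟨a_i^2 : 1 ≤ i ≤ n⟩. Then D is a central subgroup of G and G/(CD) is isomorphic to (Z/2Z)^n. -/

import Mathlib

/-- The relator set of `Gₙ(Altₙ)`: the words `(a₁a₂⋯aₙ)(a_{σ(1)}⋯a_{σ(n)})⁻¹`
for all even permutations `σ`. -/
def GAltRels (n : ℕ) : Set (FreeGroup (Fin n)) :=
  { w | ∃ σ ∈ alternatingGroup (Fin n),
      w = (List.ofFn (fun i : Fin n => FreeGroup.of i)).prod *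
        ((List.ofFn (fun i : Fin n => FreeGroup.of (σ i))).prod)⁻¹ }

/-- The group `Gₙ(Altₙ) = ⟨a₁,…,aₙ ∣ a₁a₂⋯aₙ = a_{σ(1)}⋯a_{σ(n)}, σ ∈ Altₙ⟩`. -/
abbrev GAlt (n : ℕ) : Type := PresentedGroup (GAltRels n)

/-- The generator `aᵢ` of `Gₙ(Altₙ)`. -/
def b (n : ℕ) (i : Fin n) : GAlt n := PresentedGroup.of i

/-- The subgroup `C = ⟨a₁a₂a₁⁻¹a₂⁻¹⟩` of `Gₙ(Altₙ)`. -/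
def Csub (n : ℕ) [NeZero n] : Subgroup (GAlt n) :=
  Subgroup.zpowers (b n 0 * b n 1 * (b n 0)⁻¹ * (b n 1)⁻¹)

/-- The subgroup `D = ⟨aᵢ² : 1 ≤ i ≤ n⟩` of `Gₙ(Altₙ)`. -/
def Dsub (n : ℕ) : Subgroup (GAlt n) :=
  Subgroup.closure (Set.range fun i : Fin n => (b n i) ^ 2)

/-- The word `a_{σ(1)} ⋯ a_{σ(n)}` in `GAlt n`. -/
def S17W (n : ℕ) (σ : Equiv.Perm (Fin n)) : GAlt n :=
  (List.ofFn fun p => b n (σ p)).prod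

lemma S17W_eq_mk (n : ℕ) (σ : Equiv.Perm (Fin n)) :
    S17W n σ = PresentedGroup.mk (GAltRels n)
      (List.ofFn fun p : Fin n => FreeGroup.of (σ p)).prod := by
  rw [S17W, map_list_prod, List.map_ofFn]
  rfl

lemma S17rel (n : ℕ) (σ : Equiv.Perm (Fin n)) (hσ : σ ∈ alternatingGroup (Fin n)) :
    S17W n σ = S17W n 1 := by
  have hmem : ((List.ofFn (fun i : Fin n => FreeGroup.of i)).prod *
      ((List.ofFn (fun i : Fin n => FreeGroup.of (σ i))).prod)⁻¹)
      ∈ Subgroup.normalClosure (GAltRels n) :=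
    Subgroup.subset_normalClosure ⟨σ, hσ, rfl⟩
  have h1 : PresentedGroup.mk (GAltRels n) ((List.ofFn (fun i : Fin n => FreeGroup.of i)).prod *
      ((List.ofFn (fun i : Fin n => FreeGroup.of (σ i))).prod)⁻¹) = 1 :=
    (QuotientGroup.eq_one_iff _).2 hmem
  rw [map_mul, map_inv] at h1
  have h2 := mul_eq_one_iff_eq_inv.1 h1
  rw [inv_inv] at h2
  rw [S17W_eq_mk, S17W_eq_mk, ← h2]
  simp

lemma S17rel' (n : ℕ) (σ τ : Equiv.Perm (Fin n)) (hσ : σ ∈ alternatingGroup (Fin n))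
    (hτ : τ ∈ alternatingGroup (Fin n)) :
    (List.ofFn fun p => b n (σ p)).prod = (List.ofFn fun p => b n (τ p)).prod :=
  (S17rel n σ hσ).trans (S17rel n τ hτ).symm

lemma S17head4 (n : ℕ) (hn : 4 ≤ n) (σ τ : Equiv.Perm (Fin n))
    (hσ : σ ∈ alternatingGroup (Fin n)) (hτ : τ ∈ alternatingGroup (Fin n))
    (hagree : ∀ p : Fin n, 4 ≤ p.val → σ p = τ p) :
    b n (σ ⟨0, by omega⟩) * b n (σ ⟨1, by omega⟩) * b n (σ ⟨2, by omega⟩) *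
      b n (σ ⟨3, by omega⟩)
    = b n (τ ⟨0, by omega⟩) * b n (τ ⟨1, by omega⟩) * b n (τ ⟨2, by omega⟩) *
      b n (τ ⟨3, by omega⟩) := by
  obtain ⟨m, rfl⟩ : ∃ m, n = m + 4 := ⟨n - 4, by omega⟩
  have h := S17rel' (m + 4) σ τ hσ hτ
  rw [List.ofFn_succ, List.ofFn_succ, List.ofFn_succ, List.ofFn_succ] at h
  rw [List.ofFn_succ (f := fun p => b (m+4) (τ p)), List.ofFn_succ, List.ofFn_succ,
    List.ofFn_succ] at h
  simp only [List.prod_cons] at h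
  have htail : (List.ofFn fun i : Fin m => b (m+4) (σ i.succ.succ.succ.succ)).prod
      = (List.ofFn fun i : Fin m => b (m+4) (τ i.succ.succ.succ.succ)).prod := by
    have hfun : (fun i : Fin m => b (m+4) (σ i.succ.succ.succ.succ))
        = fun i : Fin m => b (m+4) (τ i.succ.succ.succ.succ) := by
      funext i
      congr 1
      apply hagree
      simp [Fin.val_succ]
    rw [hfun]
  rw [htail] at h
  have h0 : ((0 : Fin (m+4)) : Fin (m+4)) = ⟨0, by omega⟩ := rfl
  have hs0 : (Fin.succ (0 : Fin (m+3))) = (⟨1, by omega⟩ : Fin (m+4)) := by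
    ext; simp
  have hs1 : (Fin.succ (Fin.succ (0 : Fin (m+2)))) = (⟨2, by omega⟩ : Fin (m+4)) := by
    ext; simp
  have hs2 : (Fin.succ (Fin.succ (Fin.succ (0 : Fin (m+1))))) = (⟨3, by omega⟩ : Fin (m+4)) := by
    ext; simp
  rw [h0, hs0, hs1, hs2] at h
  -- now h : b (σ ⟨0⟩) * (b (σ ⟨1⟩) * (b (σ ⟨2⟩) * (b (σ ⟨3⟩) * R))) = same τ
  have h' : (b (m+4) (σ ⟨0, by omega⟩) * b (m+4) (σ ⟨1, by omega⟩) * b (m+4) (σ ⟨2, by omega⟩) *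
      b (m+4) (σ ⟨3, by omega⟩)) *
      (List.ofFn fun i : Fin m => b (m+4) (τ i.succ.succ.succ.succ)).prod
      = (b (m+4) (τ ⟨0, by omega⟩) * b (m+4) (τ ⟨1, by omega⟩) * b (m+4) (τ ⟨2, by omega⟩) *
      b (m+4) (τ ⟨3, by omega⟩)) *
      (List.ofFn fun i : Fin m => b (m+4) (τ i.succ.succ.succ.succ)).prod := by
    simpa [mul_assoc] using h
  exact mul_right_cancel h'


set_option maxHeartbeats 1000000 in

lemma S17exists_front (n : ℕ) (hn : 4 ≤ n) (i j k l : Fin n)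
    (hij : i ≠ j) (hik : i ≠ k) (hil : i ≠ l) (hjk : j ≠ k) (hjl : j ≠ l) (hkl : k ≠ l) :
    ∃ σ : Equiv.Perm (Fin n), σ ⟨0, by omega⟩ = i ∧ σ ⟨1, by omega⟩ = j ∧
      σ ⟨2, by omega⟩ = k ∧ σ ⟨3, by omega⟩ = l := by
  set P0 : Fin n := ⟨0, by omega⟩ with hP0
  set P1 : Fin n := ⟨1, by omega⟩ with hP1
  set P2 : Fin n := ⟨2, by omega⟩ with hP2
  set P3 : Fin n := ⟨3, by omega⟩ with hP3
  have h01 : P0 ≠ P1 := by simp [hP0, hP1]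
  have h02 : P0 ≠ P2 := by simp [hP0, hP2]
  have h03 : P0 ≠ P3 := by simp [hP0, hP3]
  have h12 : P1 ≠ P2 := by simp [hP1, hP2]
  have h13 : P1 ≠ P3 := by simp [hP1, hP3]
  have h23 : P2 ≠ P3 := by simp [hP2, hP3]
  set t1 : Equiv.Perm (Fin n) := Equiv.swap P0 i with ht1
  set t2 : Equiv.Perm (Fin n) := Equiv.swap P1 (t1 j) with ht2
  set t3 : Equiv.Perm (Fin n) := Equiv.swap P2 (t2 (t1 k)) with ht3
  set t4 : Equiv.Perm (Fin n) := Equiv.swap P3 (t3 (t2 (t1 l))) with ht4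
  -- basic facts
  have ht1i : t1 i = P0 := Equiv.swap_apply_right _ _
  have ht1j : t1 j ≠ P0 := by
    rw [← ht1i]; exact t1.injective.ne (Ne.symm hij)
  have ht1k : t1 k ≠ P0 := by
    rw [← ht1i]; exact t1.injective.ne (Ne.symm hik)
  have ht1l : t1 l ≠ P0 := by
    rw [← ht1i]; exact t1.injective.ne (Ne.symm hil)
  have ht2P0 : t2 P0 = P0 :=
    Equiv.swap_apply_of_ne_of_ne h01 (Ne.symm ht1j)
  have ht2j : t2 (t1 j) = P1 := Equiv.swap_apply_right _ _
  have ht2k : t2 (t1 k) ≠ P0 := by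
    rw [← ht2P0]; exact t2.injective.ne ht1k
  have ht2k1 : t2 (t1 k) ≠ P1 := by
    rw [← ht2j]; exact t2.injective.ne (t1.injective.ne (Ne.symm hjk))
  have ht2l : t2 (t1 l) ≠ P0 := by
    rw [← ht2P0]; exact t2.injective.ne ht1l
  have ht2l1 : t2 (t1 l) ≠ P1 := by
    rw [← ht2j]; exact t2.injective.ne (t1.injective.ne (Ne.symm hjl))
  have ht3P0 : t3 P0 = P0 :=
    Equiv.swap_apply_of_ne_of_ne h02 (Ne.symm ht2k)
  have ht3P1 : t3 P1 = P1 :=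
    Equiv.swap_apply_of_ne_of_ne h12 (Ne.symm ht2k1)
  have ht3k : t3 (t2 (t1 k)) = P2 := Equiv.swap_apply_right _ _
  have ht3l0 : t3 (t2 (t1 l)) ≠ P0 := by
    rw [← ht3P0]; exact t3.injective.ne ht2l
  have ht3l1 : t3 (t2 (t1 l)) ≠ P1 := by
    rw [← ht3P1]; exact t3.injective.ne ht2l1
  have ht3l2 : t3 (t2 (t1 l)) ≠ P2 := by
    rw [← ht3k]; exact t3.injective.ne (t2.injective.ne (t1.injective.ne (Ne.symm hkl)))
  have ht4P0 : t4 P0 = P0 :=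
    Equiv.swap_apply_of_ne_of_ne h03 (Ne.symm ht3l0)
  have ht4P1 : t4 P1 = P1 :=
    Equiv.swap_apply_of_ne_of_ne h13 (Ne.symm ht3l1)
  have ht4P2 : t4 P2 = P2 :=
    Equiv.swap_apply_of_ne_of_ne h23 (Ne.symm ht3l2)
  have ht4l : t4 (t3 (t2 (t1 l))) = P3 := Equiv.swap_apply_right _ _
  refine ⟨(t1.trans (t2.trans (t3.trans t4))).symm, ?_, ?_, ?_, ?_⟩
  · rw [Equiv.symm_apply_eq]
    simp only [Equiv.trans_apply]
    rw [ht1i, ht2P0, ht3P0, ht4P0]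
  · rw [Equiv.symm_apply_eq]
    simp only [Equiv.trans_apply]
    rw [ht2j, ht3P1, ht4P1]
  · rw [Equiv.symm_apply_eq]
    simp only [Equiv.trans_apply]
    rw [ht3k, ht4P2]
  · rw [Equiv.symm_apply_eq]
    simp only [Equiv.trans_apply]
    rw [ht4l]

lemma S17exists_other (n : ℕ) (hn : 4 ≤ n) (s : Finset (Fin n)) (hs : s.card < n) :
    ∃ x : Fin n, x ∉ s := by
  by_contra h
  push_neg at h
  have : (Finset.univ : Finset (Fin n)) ⊆ s := fun x _ => h x
  have := Finset.card_le_card this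
  simp [Finset.card_fin] at this
  omega

set_option maxHeartbeats 1000000 in
lemma S17comm3 (n : ℕ) (hn : 4 ≤ n) {i j k : Fin n} (hij : i ≠ j) (hik : i ≠ k)
    (hjk : j ≠ k) : Commute (b n i) (b n j * b n k) := by
  obtain ⟨l, hl⟩ := S17exists_other n hn {i, j, k} (by
    have h1 := Finset.card_insert_le i ({j, k} : Finset (Fin n))
    have h2 := Finset.card_insert_le j ({k} : Finset (Fin n))
    have h3 : ({k} : Finset (Fin n)).card = 1 := Finset.card_singleton k
    omega)
  simp only [Finset.mem_insert, Finset.mem_singleton, not_or] at hl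
  obtain ⟨hli, hlj, hlk⟩ := hl
  have hil : i ≠ l := Ne.symm hli
  have hjl : j ≠ l := Ne.symm hlj
  have hkl : k ≠ l := Ne.symm hlk
  have hh0 : 0 < n := by omega
  have hh1 : 1 < n := by omega
  have hh2 : 2 < n := by omega
  have hh3 : 3 < n := by omega
  obtain ⟨σ, hσ0, hσ1, hσ2, hσ3⟩ := S17exists_front n hn i j k l hij hik hil hjk hjl hkl
  let P0 : Fin n := ⟨0, hh0⟩
  let P1 : Fin n := ⟨1, hh1⟩
  let P2 : Fin n := ⟨2, hh2⟩
  let P3 : Fin n := ⟨3, hh3⟩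
  have hP0 : P0 = ⟨0, hh0⟩ := rfl
  have hP1 : P1 = ⟨1, hh1⟩ := rfl
  have hP2 : P2 = ⟨2, hh2⟩ := rfl
  have hP3 : P3 = ⟨3, hh3⟩ := rfl
  have hσ0' : σ P0 = i := hσ0
  have hσ1' : σ P1 = j := hσ1
  have hσ2' : σ P2 = k := hσ2
  have hσ3' : σ P3 = l := hσ3
  have h01 : P0 ≠ P1 := by simp [hP0, hP1]
  have h02 : P0 ≠ P2 := by simp [hP0, hP2]
  have h03 : P0 ≠ P3 := by simp [hP0, hP3]
  have h12 : P1 ≠ P2 := by simp [hP1, hP2]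
  have h13 : P1 ≠ P3 := by simp [hP1, hP3]
  have h23 : P2 ≠ P3 := by simp [hP2, hP3]
  have hfix : ∀ (a c : Fin n) (p : Fin n), 4 ≤ p.val → a.val < 4 → c.val < 4 →
      Equiv.swap a c p = p := by
    intro a c p hp ha hc
    have hpa : p ≠ a := fun h => by rw [h] at hp; omega
    have hpc : p ≠ c := fun h => by rw [h] at hp; omega
    exact Equiv.swap_apply_of_ne_of_ne hpa hpc
  -- goal: b i * (b j * b k) = (b j * b k) * b i
  rcases Int.units_eq_one_or (Equiv.Perm.sign σ) with hsgn | hsgn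
  · -- σ even, use τ = σ * ρ with ρ the 3-cycle P0 → P1 → P2 → P0
    set ρ : Equiv.Perm (Fin n) := Equiv.swap P0 P1 * Equiv.swap P1 P2 with hρ
    have hρsgn : Equiv.Perm.sign ρ = 1 := by
      rw [hρ, map_mul, Equiv.Perm.sign_swap h01, Equiv.Perm.sign_swap h12]
      norm_num
    have hσmem : σ ∈ alternatingGroup (Fin n) := Equiv.Perm.mem_alternatingGroup.2 hsgn
    have hτmem : σ * ρ ∈ alternatingGroup (Fin n) := by
      rw [Equiv.Perm.mem_alternatingGroup, map_mul, hsgn, hρsgn]; norm_num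
    have hagree : ∀ p : Fin n, 4 ≤ p.val → σ p = (σ * ρ) p := by
      intro p hp
      have hfp : ρ p = p := by
        rw [hρ]
        simp only [Equiv.Perm.mul_apply]
        rw [hfix P1 P2 p hp (by simp [hP1]) (by simp [hP2]),
          hfix P0 P1 p hp (by simp [hP0]) (by simp [hP1])]
      simp only [Equiv.Perm.mul_apply, hfp]
    have h := S17head4 n hn σ (σ * ρ) hσmem hτmem hagree
    have hρ0 : ρ P0 = P1 := by
      rw [hρ]; simp only [Equiv.Perm.mul_apply]
      rw [Equiv.swap_apply_of_ne_of_ne h01 h02, Equiv.swap_apply_left]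
    have hρ1 : ρ P1 = P2 := by
      rw [hρ]; simp only [Equiv.Perm.mul_apply]
      rw [Equiv.swap_apply_left, Equiv.swap_apply_of_ne_of_ne (Ne.symm h02) (Ne.symm h12)]
    have hρ2 : ρ P2 = P0 := by
      rw [hρ]; simp only [Equiv.Perm.mul_apply]
      rw [Equiv.swap_apply_right, Equiv.swap_apply_right]
    have hρ3 : ρ P3 = P3 := by
      rw [hρ]; simp only [Equiv.Perm.mul_apply]
      rw [Equiv.swap_apply_of_ne_of_ne (Ne.symm h13) (Ne.symm h23),
        Equiv.swap_apply_of_ne_of_ne (Ne.symm h03) (Ne.symm h13)]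
    rw [show (⟨0, by omega⟩ : Fin n) = P0 from rfl, show (⟨1, by omega⟩ : Fin n) = P1 from rfl,
      show (⟨2, by omega⟩ : Fin n) = P2 from rfl, show (⟨3, by omega⟩ : Fin n) = P3 from rfl] at h
    simp only [Equiv.Perm.mul_apply, hρ0, hρ1, hρ2, hρ3] at h
    rw [hσ0', hσ1', hσ2', hσ3'] at h
    -- h : b i * b j * b k * b l = b j * b k * b i * b l
    have h2 : b n i * b n j * b n k = b n j * b n k * b n i := by
      have h' : (b n i * b n j * b n k) * b n l = (b n j * b n k * b n i) * b n l := by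
        simpa [mul_assoc] using h
      exact mul_right_cancel h'
    show b n i * (b n j * b n k) = (b n j * b n k) * b n i
    rw [← mul_assoc, h2]
  · -- σ odd
    set δ : Equiv.Perm (Fin n) := Equiv.swap P3 P2 * Equiv.swap P2 P1 * Equiv.swap P1 P0 with hδ
    set σ' : Equiv.Perm (Fin n) := σ * δ with hσ'
    have hδsgn : Equiv.Perm.sign δ = -1 := by
      rw [hδ, map_mul, map_mul, Equiv.Perm.sign_swap (Ne.symm h23),
        Equiv.Perm.sign_swap (Ne.symm h12), Equiv.Perm.sign_swap (Ne.symm h01)]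
      norm_num
    have hσ'sgn : Equiv.Perm.sign σ' = 1 := by
      rw [hσ', map_mul, hsgn, hδsgn]; norm_num
    have hσ'mem : σ' ∈ alternatingGroup (Fin n) := Equiv.Perm.mem_alternatingGroup.2 hσ'sgn
    set ρ' : Equiv.Perm (Fin n) := Equiv.swap P1 P2 * Equiv.swap P2 P3 with hρ'
    have hρ'sgn : Equiv.Perm.sign ρ' = 1 := by
      rw [hρ', map_mul, Equiv.Perm.sign_swap h12, Equiv.Perm.sign_swap h23]
      norm_num
    have hτ'mem : σ' * ρ' ∈ alternatingGroup (Fin n) := by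
      rw [Equiv.Perm.mem_alternatingGroup, map_mul, hσ'sgn, hρ'sgn]; norm_num
    have hagree : ∀ p : Fin n, 4 ≤ p.val → σ' p = (σ' * ρ') p := by
      intro p hp
      have hfp : ρ' p = p := by
        rw [hρ']
        simp only [Equiv.Perm.mul_apply]
        rw [hfix P2 P3 p hp (by simp [hP2]) (by simp [hP3]),
          hfix P1 P2 p hp (by simp [hP1]) (by simp [hP2])]
      simp only [Equiv.Perm.mul_apply, hfp]
    have h := S17head4 n hn σ' (σ' * ρ') hσ'mem hτ'mem hagree
    have hδ0 : δ P0 = P3 := by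
      rw [hδ]; simp only [Equiv.Perm.mul_apply]
      rw [Equiv.swap_apply_right, Equiv.swap_apply_right, Equiv.swap_apply_right]
    have hδ1 : δ P1 = P0 := by
      rw [hδ]; simp only [Equiv.Perm.mul_apply]
      rw [Equiv.swap_apply_left,
        Equiv.swap_apply_of_ne_of_ne h02 h01,
        Equiv.swap_apply_of_ne_of_ne h03 h02]
    have hδ2 : δ P2 = P1 := by
      rw [hδ]; simp only [Equiv.Perm.mul_apply]
      rw [Equiv.swap_apply_of_ne_of_ne (Ne.symm h12) (Ne.symm h02)]
      rw [Equiv.swap_apply_left]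
      rw [Equiv.swap_apply_of_ne_of_ne h13 h12]
    have hδ3 : δ P3 = P2 := by
      rw [hδ]; simp only [Equiv.Perm.mul_apply]
      rw [Equiv.swap_apply_of_ne_of_ne (Ne.symm h13) (Ne.symm h03),
        Equiv.swap_apply_of_ne_of_ne (Ne.symm h23) (Ne.symm h13),
        Equiv.swap_apply_left]
    have hρ'0 : ρ' P0 = P0 := by
      rw [hρ']; simp only [Equiv.Perm.mul_apply]
      rw [Equiv.swap_apply_of_ne_of_ne h02 h03, Equiv.swap_apply_of_ne_of_ne h01 h02]
    have hρ'1 : ρ' P1 = P2 := by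
      rw [hρ']; simp only [Equiv.Perm.mul_apply]
      rw [Equiv.swap_apply_of_ne_of_ne h12 h13, Equiv.swap_apply_left]
    have hρ'2 : ρ' P2 = P3 := by
      rw [hρ']; simp only [Equiv.Perm.mul_apply]
      rw [Equiv.swap_apply_left, Equiv.swap_apply_of_ne_of_ne (Ne.symm h13) (Ne.symm h23)]
    have hρ'3 : ρ' P3 = P1 := by
      rw [hρ']; simp only [Equiv.Perm.mul_apply]
      rw [Equiv.swap_apply_right, Equiv.swap_apply_right]
    rw [show (⟨0, by omega⟩ : Fin n) = P0 from rfl, show (⟨1, by omega⟩ : Fin n) = P1 from rfl,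
      show (⟨2, by omega⟩ : Fin n) = P2 from rfl, show (⟨3, by omega⟩ : Fin n) = P3 from rfl] at h
    simp only [Equiv.Perm.mul_apply, hρ'0, hρ'1, hρ'2, hρ'3] at h
    rw [hσ'] at h
    simp only [Equiv.Perm.mul_apply, hδ0, hδ1, hδ2, hδ3] at h
    rw [hσ0', hσ1', hσ2', hσ3'] at h
    -- h : b l * b i * b j * b k = b l * b j * b k * b i
    have h2 : b n i * (b n j * b n k) = b n j * (b n k * b n i) := by
      have h' : b n l * (b n i * (b n j * b n k)) = b n l * (b n j * (b n k * b n i)) := by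
        simpa [mul_assoc] using h
      exact mul_left_cancel h'
    show b n i * (b n j * b n k) = (b n j * b n k) * b n i
    rw [h2, mul_assoc]


lemma S17sq_comm (n : ℕ) (hn : 4 ≤ n) (i m : Fin n) : Commute (b n i) (b n m ^ 2) := by
  rcases eq_or_ne i m with rfl | him
  · exact (Commute.refl _).pow_right 2
  obtain ⟨j, hj⟩ := S17exists_other n hn {i, m} (by
    have h1 := Finset.card_insert_le i ({m} : Finset (Fin n))
    have h2 : ({m} : Finset (Fin n)).card = 1 := Finset.card_singleton m
    omega)
  simp only [Finset.mem_insert, Finset.mem_singleton, not_or] at hj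
  obtain ⟨hji, hjm⟩ := hj
  obtain ⟨l, hl⟩ := S17exists_other n hn {i, m, j} (by
    have h1 := Finset.card_insert_le i ({m, j} : Finset (Fin n))
    have h2 := Finset.card_insert_le m ({j} : Finset (Fin n))
    have h3 : ({j} : Finset (Fin n)).card = 1 := Finset.card_singleton j
    omega)
  simp only [Finset.mem_insert, Finset.mem_singleton, not_or] at hl
  obtain ⟨hli, hlm, hlj⟩ := hl
  have c1 : Commute (b n i) (b n m * b n j) := S17comm3 n hn him (Ne.symm hji) (Ne.symm hjm)
  have c2 : Commute (b n i) (b n l * b n j) := S17comm3 n hn (Ne.symm hli) (Ne.symm hji) hlj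
  have c3 : Commute (b n i) (b n l * b n m) := S17comm3 n hn (Ne.symm hli) him (Ne.symm hlm).symm
  have hdecomp : b n m ^ 2 = (b n m * b n j) * ((b n l * b n j)⁻¹ * (b n l * b n m)) := by
    rw [pow_two]; group
  rw [hdecomp]
  exact c1.mul_right (c2.inv_right.mul_right c3)

lemma S17sq_central (n : ℕ) (hn : 4 ≤ n) (m : Fin n) :
    b n m ^ 2 ∈ Subgroup.center (GAlt n) := by
  rw [Subgroup.mem_center_iff]
  intro g
  have hg : g ∈ Subgroup.closure (Set.range (PresentedGroup.of : Fin n → GAlt n)) := by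
    rw [PresentedGroup.closure_range_of]; trivial
  have : Commute g (b n m ^ 2) := by
    induction hg using Subgroup.closure_induction with
    | mem x hx => obtain ⟨y, rfl⟩ := hx; exact S17sq_comm n hn y m
    | one => exact Commute.one_left _
    | mul x y _ _ hx hy => exact hx.mul_left hy
    | inv x _ hx => exact hx.inv_left
  exact this

/-- The commutator `a_i a_j a_i⁻¹ a_j⁻¹`. -/
def S17c (n : ℕ) (i j : Fin n) : GAlt n := b n i * b n j * (b n i)⁻¹ * (b n j)⁻¹

lemma S17c_swap (n : ℕ) (i j : Fin n) : S17c n i j = (S17c n j i)⁻¹ := by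
  simp only [S17c]; group

lemma S17c_eq (n : ℕ) (hn : 4 ≤ n) {i j k : Fin n} (hij : i ≠ j) (hik : i ≠ k)
    (hjk : j ≠ k) : S17c n i j = S17c n i k := by
  have h1 : Commute (b n i) (b n j * b n k) := S17comm3 n hn hij hik hjk
  have h2 : Commute (b n i) ((b n j ^ 2)⁻¹) := (S17sq_comm n hn i j).inv_right
  have h3 : Commute (b n i) ((b n j)⁻¹ * b n k) := by
    have := h2.mul_right h1
    have e : (b n j ^ 2)⁻¹ * (b n j * b n k) = (b n j)⁻¹ * b n k := by rw [pow_two]; group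
    rwa [e] at this
  have e : (b n i)⁻¹ * ((b n j)⁻¹ * b n k) = ((b n j)⁻¹ * b n k) * (b n i)⁻¹ :=
    h3.inv_left
  have h4 := congrArg (fun x => b n i * b n j * x * (b n k)⁻¹) e
  simp only [S17c]
  calc b n i * b n j * (b n i)⁻¹ * (b n j)⁻¹
      = b n i * b n j * ((b n i)⁻¹ * ((b n j)⁻¹ * b n k)) * (b n k)⁻¹ := by group
    _ = b n i * b n j * (((b n j)⁻¹ * b n k) * (b n i)⁻¹) * (b n k)⁻¹ := by rw [e]
    _ = b n i * b n k * (b n i)⁻¹ * (b n k)⁻¹ := by group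

lemma S17c_sq (n : ℕ) (hn : 4 ≤ n) {i j : Fin n} (hij : i ≠ j) :
    S17c n i j * S17c n i j = 1 := by
  obtain ⟨k, hk⟩ := S17exists_other n hn {i, j} (by
    have h1 := Finset.card_insert_le i ({j} : Finset (Fin n))
    have h2 : ({j} : Finset (Fin n)).card = 1 := Finset.card_singleton j
    omega)
  simp only [Finset.mem_insert, Finset.mem_singleton, not_or] at hk
  obtain ⟨hki, hkj⟩ := hk
  have e1 : S17c n j i = S17c n j k := S17c_eq n hn (Ne.symm hij) (Ne.symm hkj) (Ne.symm hki)
  have e2 : S17c n j k = (S17c n k j)⁻¹ := S17c_swap n j k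
  have e3 : S17c n k j = S17c n k i := S17c_eq n hn hkj hki (Ne.symm hij)
  have e4 : S17c n k i = (S17c n i k)⁻¹ := S17c_swap n k i
  have e5 : S17c n i k = S17c n i j := S17c_eq n hn (Ne.symm hki) hij hkj
  have e6 : S17c n j i = (S17c n i j)⁻¹ := S17c_swap n j i
  have : (S17c n i j)⁻¹ = S17c n i j := by
    rw [← e6, e1, e2, e3, e4, inv_inv, e5]
  calc S17c n i j * S17c n i j = S17c n i j * (S17c n i j)⁻¹ := by rw [this]
    _ = 1 := mul_inv_cancel _

lemma S17c_comm_self (n : ℕ) (hn : 4 ≤ n) {i j : Fin n} (hij : i ≠ j) :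
    Commute (b n i) (S17c n i j) := by
  -- b i * c * (b i)⁻¹ = c⁻¹ = c
  have hz : b n i ^ 2 * b n j = b n j * (b n i ^ 2) :=
    (Subgroup.mem_center_iff.1 (S17sq_central n hn i) (b n j)).symm
  have h5 : b n i * S17c n i j * (b n i)⁻¹
      = (b n i ^ 2 * b n j) * ((b n i)⁻¹ * (b n j)⁻¹ * (b n i)⁻¹) := by
    simp only [S17c]; rw [pow_two]; group
  rw [hz] at h5
  have h6 : b n j * b n i ^ 2 * ((b n i)⁻¹ * (b n j)⁻¹ * (b n i)⁻¹) = (S17c n i j)⁻¹ := by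
    simp only [S17c]; rw [pow_two]; group
  rw [h6] at h5
  have hc : (S17c n i j)⁻¹ = S17c n i j :=
    inv_eq_of_mul_eq_one_left (S17c_sq n hn hij)
  rw [hc] at h5
  have := congrArg (fun x => x * b n i) h5
  exact (by simpa [mul_assoc] using this : b n i * S17c n i j = S17c n i j * b n i)

lemma S17c_central (n : ℕ) (hn : 4 ≤ n) {i j : Fin n} (hij : i ≠ j) :
    S17c n i j ∈ Subgroup.center (GAlt n) := by
  rw [Subgroup.mem_center_iff]
  intro g
  have hg : g ∈ Subgroup.closure (Set.range (PresentedGroup.of : Fin n → GAlt n)) := by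
    rw [PresentedGroup.closure_range_of]; trivial
  have key : ∀ m : Fin n, Commute (b n m) (S17c n i j) := by
    intro m
    rcases eq_or_ne m i with rfl | hmi
    · exact S17c_comm_self n hn hij
    rcases eq_or_ne m j with rfl | hmj
    · have h := S17c_comm_self n hn (Ne.symm hij)
      rw [S17c_swap n i m]
      exact h.inv_right
    · -- m ∉ {i, j}
      have hd : S17c n i j = (b n i * b n j) * ((b n i ^ 2)⁻¹ * ((b n i * b n j) *
          (b n j ^ 2)⁻¹)) := by
        simp only [S17c]; rw [pow_two, pow_two]; group
      rw [hd]
      have cij : Commute (b n m) (b n i * b n j) := S17comm3 n hn hmi hmj hij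
      have ci2 : Commute (b n m) ((b n i ^ 2)⁻¹) := (S17sq_comm n hn m i).inv_right
      have cj2 : Commute (b n m) ((b n j ^ 2)⁻¹) := (S17sq_comm n hn m j).inv_right
      exact cij.mul_right (ci2.mul_right (cij.mul_right cj2))
  have : Commute g (S17c n i j) := by
    induction hg using Subgroup.closure_induction with
    | mem x hx => obtain ⟨y, rfl⟩ := hx; exact key y
    | one => exact Commute.one_left _
    | mul x y _ _ hx hy => exact hx.mul_left hy
    | inv x _ hx => exact hx.inv_left
  exact this


lemma S17ne01 (n : ℕ) [NeZero n] (hn : 4 ≤ n) : (0 : Fin n) ≠ 1 := by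
  have h0 : ((0 : Fin n) : ℕ) = 0 := rfl
  have h1 : ((1 : Fin n) : ℕ) = 1 % n := Fin.val_one' n
  intro h
  rw [Fin.ext_iff, h0, h1, Nat.mod_eq_of_lt (by omega)] at h
  omega

lemma S17c_mem_C (n : ℕ) [NeZero n] (hn : 4 ≤ n) {i j : Fin n} (hij : i ≠ j) :
    S17c n i j ∈ Csub n := by
  have h01 : (0 : Fin n) ≠ 1 := S17ne01 n hn
  have hbase : S17c n 0 1 ∈ Csub n := Subgroup.mem_zpowers _
  have hbase' : S17c n 1 0 ∈ Csub n := by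
    rw [S17c_swap n 1 0]; exact Subgroup.inv_mem _ hbase
  by_cases hi0 : i = 0
  · subst hi0
    by_cases hj1 : j = 1
    · subst hj1; exact hbase
    · rw [S17c_eq n hn hij h01 hj1]; exact hbase
  by_cases hi1 : i = 1
  · subst hi1
    by_cases hj0 : j = 0
    · subst hj0; exact hbase'
    · rw [S17c_eq n hn hij (Ne.symm h01) hj0]; exact hbase'
  · by_cases hj1 : j = 1
    · subst hj1
      rw [S17c_swap n i 1, S17c_eq n hn (Ne.symm hi1) (Ne.symm h01) hi0]
      exact Subgroup.inv_mem _ hbase'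
    · rw [S17c_eq n hn hij hi1 hj1, S17c_swap n i 1,
        S17c_eq n hn (Ne.symm hi1) (Ne.symm h01) hi0]
      exact Subgroup.inv_mem _ hbase'

/-- map to (ℤ/2)ⁿ -/
lemma S17rels_pi (n : ℕ) :
    ∀ r ∈ GAltRels n, FreeGroup.lift
      (fun i : Fin n => Pi.mulSingle i (Multiplicative.ofAdd (1 : ZMod 2))
        : Fin n → (Fin n → Multiplicative (ZMod 2))) r = 1 := by
  intro r hr
  obtain ⟨σ, hσ, rfl⟩ := hr
  set f : Fin n → (Fin n → Multiplicative (ZMod 2)) :=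
    fun i => Pi.mulSingle i (Multiplicative.ofAdd (1 : ZMod 2)) with hf
  rw [map_mul, map_inv, map_list_prod, map_list_prod, List.map_ofFn, List.map_ofFn]
  have e1 : ((FreeGroup.lift f) ∘ fun i : Fin n => FreeGroup.of i) = f :=
    funext fun i => FreeGroup.lift_apply_of
  have e2 : ((FreeGroup.lift f) ∘ fun i : Fin n => FreeGroup.of (σ i)) = fun i => f (σ i) :=
    funext fun i => FreeGroup.lift_apply_of
  rw [e1, e2, List.prod_ofFn, List.prod_ofFn, Equiv.prod_comp σ f]
  exact mul_inv_cancel _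

/-- in `G = Gₙ(Altₙ)` with `n ≥ 4`, the subgroup `D = ⟨aᵢ²⟩` is
central and `G/(CD) ≅ (ℤ/2ℤ)ⁿ`. -/
theorem stmt17 (n : ℕ) (hn : 4 ≤ n) [NeZero n] :
    Dsub n ≤ Subgroup.center (GAlt n) ∧
    ∀ [inst : (Csub n ⊔ Dsub n).Normal],
      Nonempty ((GAlt n ⧸ (Csub n ⊔ Dsub n)) ≃* (Fin n → Multiplicative (ZMod 2))) := by
  constructor
  · rw [Dsub, Subgroup.closure_le]
    rintro x ⟨i, rfl⟩
    exact S17sq_central n hn i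
  intro inst
  set T := Fin n → Multiplicative (ZMod 2) with hT
  set N := Csub n ⊔ Dsub n with hN
  set f : Fin n → T := fun i => Pi.mulSingle i (Multiplicative.ofAdd (1 : ZMod 2)) with hf
  set π : GAlt n →* T := PresentedGroup.toGroup (S17rels_pi n) with hπ
  have hπb : ∀ i : Fin n, π (b n i) = f i := fun i => PresentedGroup.toGroup.of _
  have hNker : N ≤ π.ker := by
    rw [hN]
    apply sup_le
    · rw [Csub]
      apply Subgroup.zpowers_le_of_mem
      rw [MonoidHom.mem_ker]
      have : (b n 0 * b n 1 * (b n 0)⁻¹ * (b n 1)⁻¹ : GAlt n) = S17c n 0 1 := rfl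
      rw [this, S17c, map_mul, map_mul, map_mul, map_inv, map_inv, hπb, hπb]
      rw [mul_comm (f 0) (f 1)]
      group
    · rw [Dsub, Subgroup.closure_le]
      rintro x ⟨i, rfl⟩
      rw [SetLike.mem_coe, MonoidHom.mem_ker, map_pow, hπb]
      have hv : (Multiplicative.ofAdd (1 : ZMod 2)) * (Multiplicative.ofAdd (1 : ZMod 2)) = 1 :=
        by decide
      rw [hf]
      simp only [pow_two]
      rw [← Pi.mulSingle_mul, hv, Pi.mulSingle_one]
  set π' : (GAlt n ⧸ N) →* T := QuotientGroup.lift N π (fun x hx => hNker hx) with hπ'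
  set x : Fin n → GAlt n ⧸ N := fun i => (QuotientGroup.mk' N) (b n i) with hx
  have hx2 : ∀ i, (x i) ^ 2 = 1 := by
    intro i
    rw [hx]
    simp only [← map_pow]
    rw [QuotientGroup.mk'_apply, QuotientGroup.eq_one_iff]
    exact le_sup_right (α := Subgroup (GAlt n)) (Subgroup.subset_closure ⟨i, rfl⟩)
  set g : ∀ i : Fin n, Multiplicative (ZMod 2) →* (GAlt n ⧸ N) := fun i =>
    AddMonoidHom.toMultiplicativeLeft
      (ZMod.lift 2 ⟨zmultiplesHom (Additive (GAlt n ⧸ N)) (Additive.ofMul (x i)), by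
        rw [zmultiplesHom_apply, ← ofMul_zpow, zpow_natCast, hx2 i]
        rfl⟩) with hg
  have hgeval1 : ∀ i, g i (Multiplicative.ofAdd (1 : ZMod 2)) = x i := by
    intro i
    rw [hg]
    simp only [AddMonoidHom.coe_toMultiplicativeLeft, Function.comp_apply]
    rw [show (Multiplicative.toAdd (Multiplicative.ofAdd (1 : ZMod 2))) = ((1 : ℤ) : ZMod 2) by
      norm_num]
    rw [ZMod.lift_coe]
    simp only [zmultiplesHom_apply, one_zsmul, toMul_ofMul]
  have hcases : ∀ v : Multiplicative (ZMod 2), v = 1 ∨ v = Multiplicative.ofAdd (1 : ZMod 2) := by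
    decide
  have hcommx : ∀ i j : Fin n, i ≠ j → Commute (x i) (x j) := by
    intro i j hij
    have hm : S17c n i j ∈ N := le_sup_left (α := Subgroup (GAlt n)) (S17c_mem_C n hn hij)
    have h1 : (QuotientGroup.mk' N) (S17c n i j) = 1 := by
      rw [QuotientGroup.mk'_apply, QuotientGroup.eq_one_iff]
      exact hm
    rw [S17c, map_mul, map_mul, map_mul, map_inv, map_inv] at h1
    exact commutatorElement_eq_one_iff_commute.1 h1
  have hcomm : Pairwise fun i j : Fin n => ∀ a c, Commute (g i a) (g j c) := by
    intro i j hij a c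
    rcases hcases a with rfl | rfl
    · rw [(g i).map_one]; exact Commute.one_left _
    rcases hcases c with rfl | rfl
    · rw [(g j).map_one]; exact Commute.one_right _
    rw [hgeval1, hgeval1]
    exact hcommx i j hij
  set τ : T →* GAlt n ⧸ N := MonoidHom.noncommPiCoprod g hcomm with hτ
  have hτsingle : ∀ (i : Fin n) (v : Multiplicative (ZMod 2)),
      τ (Pi.mulSingle i v) = g i v := by
    intro i v
    rw [hτ]
    exact MonoidHom.noncommPiCoprod_mulSingle g i v
  have e1 : ∀ yy : Fin n, π' (x yy) = f yy := by
    intro yy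
    show (QuotientGroup.lift N π fun xx hxx => hNker hxx) ((QuotientGroup.mk' N) (b n yy)) = f yy
    exact hπb yy
  have hcomp1 : π'.comp τ = MonoidHom.id T := by
    apply MonoidHom.functions_ext
    intro i v
    rcases hcases v with rfl | rfl
    · rw [Pi.mulSingle_one]
      simp only [map_one, MonoidHom.id_apply]
    · rw [MonoidHom.comp_apply, hτsingle, hgeval1, MonoidHom.id_apply]
      exact e1 i
  have hcomp2 : τ.comp π' = MonoidHom.id (GAlt n ⧸ N) := by
    apply QuotientGroup.monoidHom_ext
    apply PresentedGroup.ext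
    intro y
    simp only [MonoidHom.comp_apply, MonoidHom.id_apply]
    have e0 : (QuotientGroup.mk' N) (PresentedGroup.of (rels := GAltRels n) y) = x y := rfl
    rw [e0, e1 y]
    show τ (Pi.mulSingle y (Multiplicative.ofAdd (1 : ZMod 2))) = x y
    rw [hτsingle, hgeval1]
  exact ⟨MonoidHom.toMulEquiv π' τ hcomp2 hcomp1⟩
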